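/- Let e > 0 be real and define sequences (a_ℓ), (b_ℓ) by b₀ = e - 6, a₀ = 2e + 6, b_{ℓ+1} = -b_ℓ²/a_ℓ, a_{ℓ+1} = 2a_ℓ + b_{ℓ+1}, and set r_ℓ = b_ℓ/a_ℓ. Then for every ℓ ≥ 0 the inequality a_{ℓ+1}² - 36 > 96(1 - r_ℓ²) holds. -/

import Mathlib

/-- Key polynomial inequality: if `A > 6`, `K > 0`, and (when `A² < 48`)
`4K ≤ 3A² + 36A - 324`, then `(A² + K)² - 36A² - 96K > 0`. -/
lemma seq_key_poly (A K : ℝ) (hA : 6 < A) (hK : 0 < K)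
    (hcond : A^2 < 48 → 4*K ≤ 3*A^2 + 36*A - 324) :
    0 < (A^2 + K)^2 - 36*A^2 - 96*K := by
  rcases le_or_gt 48 (A^2) with h48 | h48
  · have h36 : (36:ℝ) < A^2 := by nlinarith
    nlinarith [mul_nonneg hK.le (sub_nonneg.2 h48), sq_nonneg K,
      mul_pos (show (0:ℝ) < A^2 by positivity) (show (0:ℝ) < A^2 - 36 by linarith)]
  · have hM := hcond h48
    rcases le_or_gt 516 (7*A^2 + 36*A) with hbig | hsmall
    · have h5 : 192 < 5*A^2 := by nlinarith [sq_nonneg (15*A - 103)]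
      nlinarith [sq_nonneg (A^2 + K - 48)]
    · have t1 : 0 ≤ (3*A^2 + 36*A - 324 - 4*K) * (384 - 4*K - (3*A^2+36*A-324) - 8*A^2) := by
        apply mul_nonneg <;> linarith
      have t2 : 0 < (A-6)^2 * (49*A^2 + 1092*A + 6372) := by
        apply mul_pos (pow_pos (show (0:ℝ) < A - 6 by linarith) 2)
        nlinarith
      nlinarith [t1, t2]

/-- Preservation of the invariant under one step. -/
lemma seq_step_poly (A K : ℝ) (hA : 6 < A) (hK : 0 < K)
    (hM : 4*K ≤ 3*A^2 + 36*A - 324) (h48 : A^2 < 48) :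
    16*K*A^2 ≤ 3*(A^2+K)^2 + 36*A*(A^2+K) - 324*A^2 := by
  have hA7 : A < 7 := by nlinarith
  have t1 : 0 ≤ (3*A^2 + 36*A - 324 - 4*K) * (11*A^2 - 180*A + 972) := by
    apply mul_nonneg (by linarith)
    nlinarith [sq_nonneg (11*A - 90)]
  have t2 : 0 ≤ 9*(A-6)^2 * (A+18) * (54 - 5*A) := by
    apply mul_nonneg (mul_nonneg (by positivity) (by linarith)) (by linarith)
  nlinarith [t1, t2, sq_nonneg (4*K - (3*A^2 + 36*A - 324))]

/-- For the coupled sequences b₀ = e - 6, a₀ = 2e + 6, b_{ℓ+1} = -b_ℓ²/a_ℓ,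
a_{ℓ+1} = 2a_ℓ + b_{ℓ+1} with r_ℓ = b_ℓ/a_ℓ: the inequality
a_{ℓ+1}² - 36 > 96(1 - r_ℓ²) holds for every ℓ. -/
theorem seq_key_inequality (e : ℝ) (he : 0 < e) (a b r : ℕ → ℝ)
    (hb0 : b 0 = e - 6) (ha0 : a 0 = 2*e + 6)
    (hb : ∀ ℓ, b (ℓ+1) = -((b ℓ)^2) / a ℓ)
    (ha : ∀ ℓ, a (ℓ+1) = 2 * a ℓ + b (ℓ+1))
    (hr : ∀ ℓ, r ℓ = b ℓ / a ℓ) :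
    ∀ ℓ, (a (ℓ+1))^2 - 36 > 96 * (1 - (r ℓ)^2) := by
  -- The invariant
  have inv : ∀ ℓ, 6 < a ℓ ∧ 0 < (a ℓ)^2 - (b ℓ)^2 ∧
      ((a ℓ)^2 < 48 → 4*((a ℓ)^2 - (b ℓ)^2) ≤ 3*(a ℓ)^2 + 36*(a ℓ) - 324) := by
    intro ℓ
    induction ℓ with
    | zero =>
      refine ⟨by rw [ha0]; linarith, by rw [ha0, hb0]; nlinarith, fun _ => ?_⟩
      rw [ha0, hb0]; ring_nf; nlinarith
    | succ n ih =>
      obtain ⟨h1, h2, h3⟩ := ih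
      set A := a n with hAdef
      set B := b n with hBdef
      have hA : (0:ℝ) < A := by linarith
      have hAne : A ≠ 0 := ne_of_gt hA
      have e2 : b (n+1) = -B^2 / A := hb n
      have e1 : a (n+1) = (2*A^2 - B^2) / A := by
        rw [ha n, e2]; field_simp; ring
      have hK4 : (a (n+1))^2 - (b (n+1))^2 = 4*(A^2 - B^2) := by
        rw [e1, e2]; field_simp; ring
      have haa : A < a (n+1) := by
        rw [e1, lt_div_iff₀ hA]; nlinarith
      have h1' : 6 < a (n+1) := by linarith
      refine ⟨h1', by rw [hK4]; linarith, ?_⟩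
      intro h48'
      have hA48 : A^2 < 48 := by nlinarith
      have hM := h3 hA48
      have key2 : 16*(A^2 - B^2)*A^2 ≤
          3*(A^2 + (A^2 - B^2))^2 + 36*A*(A^2 + (A^2 - B^2)) - 324*A^2 :=
        seq_step_poly A (A^2 - B^2) h1 h2 hM hA48
      rw [hK4, e1, div_pow]
      have expand : 3*((2*A^2 - B^2)^2 / A^2) + 36*((2*A^2 - B^2)/A) - 324 =
          (3*(2*A^2 - B^2)^2 + 36*A*(2*A^2 - B^2) - 324*A^2) / A^2 := by
        field_simp
      rw [expand, le_div_iff₀ (by positivity : (0:ℝ) < A^2)]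
      nlinarith [key2]
  intro ℓ
  obtain ⟨h1, h2, h3⟩ := inv ℓ
  set A := a ℓ with hAdef
  set B := b ℓ with hBdef
  have hA : (0:ℝ) < A := by linarith
  have hAne : A ≠ 0 := ne_of_gt hA
  have e1 : a (ℓ+1) = (2*A^2 - B^2) / A := by
    rw [ha ℓ, hb ℓ, ← hAdef, ← hBdef]; field_simp; ring
  have hnum : 0 < (A^2 + (A^2 - B^2))^2 - 36*A^2 - 96*(A^2 - B^2) :=
    seq_key_poly A (A^2 - B^2) h1 h2 h3
  have hfrac : (a (ℓ+1))^2 - 36 - 96*(1 - (r ℓ)^2) =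
      ((A^2 + (A^2 - B^2))^2 - 36*A^2 - 96*(A^2 - B^2)) / A^2 := by
    rw [e1, hr ℓ, ← hAdef, ← hBdef]; field_simp; ring
  have := div_pos hnum (show (0:ℝ) < A^2 by positivity)
  linarith [hfrac ▸ this]
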